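/- Let δ, κ, λ > 0 and μ ≥ 0 with δλ − κ > 0, and suppose √((κ + δμ)/(δ(δλ − κ))) < δ/(2κ). Then the equation tanh(√(2δ)·α) = δ(δ − 2κα) / (√(2δ)(δ(δλ − κ)α² − (κ + δμ))) has exactly one solution α in (0, ∞), and this unique solution satisfies √((κ + δμ)/(δ(δλ − κ))) < α < δ/(2κ). -/

import Mathlib

set_option maxHeartbeats 1000000

lemma myTanh_eq : Real.tanh = fun x => Real.sinh x / Real.cosh x :=
  funext Real.tanh_eq_sinh_div_cosh

lemma myTanh_pos {x : ℝ} (hx : 0 < x) : 0 < Real.tanh x := by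
  rw [Real.tanh_eq_sinh_div_cosh]
  exact div_pos (Real.sinh_pos_iff.2 hx) (Real.cosh_pos x)

lemma myTanh_hasDerivAt (x : ℝ) : HasDerivAt Real.tanh (1 / Real.cosh x ^ 2) x := by
  have h := (Real.hasDerivAt_sinh x).div (Real.hasDerivAt_cosh x) (Real.cosh_pos x).ne'
  have h1 : Real.cosh x * Real.cosh x - Real.sinh x * Real.sinh x = 1 := by
    nlinarith [Real.cosh_sq_sub_sinh_sq x]
  rw [myTanh_eq]
  rw [h1] at h
  exact h

lemma myTanh_continuous : Continuous Real.tanh := by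
  rw [myTanh_eq]
  exact Real.differentiable_sinh.continuous.div Real.differentiable_cosh.continuous
    fun x => (Real.cosh_pos x).ne'

lemma key (s A B p q : ℝ) (hs : 0 < s) (hA : 0 < A) (hB : 0 < B) (hp : 0 < p) (hq : 0 < q)
    (hrb : Real.sqrt (B/A) < p/q) :
    (∃! α : ℝ, 0 < α ∧ Real.tanh (s*α) = (p - q*α)/(s*(A*α^2 - B))) ∧
    (∀ α : ℝ, 0 < α → Real.tanh (s*α) = (p - q*α)/(s*(A*α^2 - B)) →
      Real.sqrt (B/A) < α ∧ α < p/q) := by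
  set r := Real.sqrt (B/A) with hr
  set b := p/q with hbdef
  have hBA : 0 < B/A := div_pos hB hA
  have hrpos : 0 < r := Real.sqrt_pos.2 hBA
  have hr2 : r^2 = B/A := Real.sq_sqrt hBA.le
  have hAr2 : A * r^2 = B := by rw [hr2]; field_simp
  have hbpos : 0 < b := lt_trans hrpos hrb
  have hqb : q * b = p := by rw [hbdef]; field_simp
  -- the bound claim
  have bound : ∀ α : ℝ, 0 < α → Real.tanh (s*α) = (p - q*α)/(s*(A*α^2 - B)) →
      r < α ∧ α < b := by
    intro α hα heq
    have ht : 0 < Real.tanh (s*α) := myTanh_pos (mul_pos hs hα)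
    have h1 : r < α := by
      by_contra hle
      push_neg at hle
      have hα2 : α^2 ≤ r^2 := pow_le_pow_left₀ hα.le hle 2
      have hd : A*α^2 - B ≤ 0 := by nlinarith
      have hnum : 0 < p - q*α := by nlinarith
      rcases hd.lt_or_eq with hd | hd
      · have : (p - q*α)/(s*(A*α^2 - B)) < 0 :=
          div_neg_of_pos_of_neg hnum (by nlinarith)
        linarith [heq ▸ ht]
      · rw [heq, hd, mul_zero, div_zero] at ht
        exact lt_irrefl 0 ht
    have h2 : α < b := by
      by_contra hge
      push_neg at hge
      have hb2 : b^2 ≤ α^2 := pow_le_pow_left₀ hbpos.le hge 2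
      have hr2b : r^2 < b^2 := pow_lt_pow_left₀ hrb hrpos.le two_ne_zero
      have hd : 0 < A*α^2 - B := by nlinarith
      have hnum : p - q*α ≤ 0 := by nlinarith
      have : (p - q*α)/(s*(A*α^2 - B)) ≤ 0 :=
        div_nonpos_of_nonpos_of_nonneg hnum (by positivity)
      linarith [heq ▸ ht]
    exact ⟨h1, h2⟩
  -- the function G
  set G : ℝ → ℝ := fun α => Real.tanh (s*α) * (s*(A*α^2 - B)) - (p - q*α) with hG
  have hGcont : Continuous G := by
    apply Continuous.sub
    · exact ((myTanh_continuous.comp (continuous_const.mul continuous_id)).mul (by continuity))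
    · continuity
  have hGr : G r = -(p - q*r) := by
    simp only [hG]
    rw [show A*r^2 - B = 0 by rw [hAr2]; ring]
    ring
  have hGrneg : G r < 0 := by rw [hGr]; nlinarith
  have hGb : 0 < G b := by
    have hd : 0 < A*b^2 - B := by nlinarith [pow_lt_pow_left₀ hrb hrpos.le (by norm_num : 2 ≠ 0)]
    have ht : 0 < Real.tanh (s*b) := myTanh_pos (mul_pos hs hbpos)
    simp only [hG]
    have hzero : p - q*b = 0 := by rw [hqb]; ring
    rw [hzero]
    nlinarith [mul_pos ht (mul_pos hs hd)]
  -- strict monotonicity of G on Icc r b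
  have hderiv : ∀ x : ℝ, HasDerivAt G
      ((1 / Real.cosh (s*x)^2 * s) * (s*(A*x^2 - B)) + Real.tanh (s*x) * (s*(A*(2*x)))
        - (-q)) x := by
    intro x
    have hlin : HasDerivAt (fun y : ℝ => s * y) s x := by
      simpa using (hasDerivAt_id x).const_mul s
    have h1 : HasDerivAt (fun α => Real.tanh (s*α)) (1 / Real.cosh (s*x)^2 * s) x :=
      (myTanh_hasDerivAt (s*x)).comp x hlin
    have h2 : HasDerivAt (fun α : ℝ => s*(A*α^2 - B)) (s*(A*(2*x))) x := by
      have := (((hasDerivAt_pow 2 x).const_mul A).sub_const B).const_mul s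
      simpa using this
    have h3 : HasDerivAt (fun α : ℝ => p - q*α) (-q) x := by
      simpa using ((hasDerivAt_id x).const_mul q).const_sub p
    exact (h1.mul h2).sub h3
  have hmono : StrictMonoOn G (Set.Icc r b) := by
    apply strictMonoOn_of_deriv_pos (convex_Icc r b) hGcont.continuousOn
    intro x hx
    rw [interior_Icc] at hx
    rw [(hderiv x).deriv]
    have hxr : r < x := hx.1
    have hx0 : 0 < x := lt_trans hrpos hxr
    have hd : 0 < A*x^2 - B := by nlinarith [pow_lt_pow_left₀ hxr hrpos.le (by norm_num : 2 ≠ 0)]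
    have ht : 0 < Real.tanh (s*x) := myTanh_pos (mul_pos hs hx0)
    have hc : 0 < 1 / Real.cosh (s*x)^2 := by positivity
    nlinarith [mul_pos (mul_pos hc hs) (mul_pos hs hd), mul_pos ht (mul_pos hs (mul_pos hA (by linarith : (0:ℝ) < 2*x)))]
  -- existence via IVT
  obtain ⟨α, hαmem, hGα⟩ := intermediate_value_Icc (le_of_lt hrb) hGcont.continuousOn
    (Set.mem_Icc.2 ⟨hGrneg.le, hGb.le⟩)
  have hαr : r < α := by
    rcases hαmem.1.lt_or_eq with h' | h'
    · exact h'
    · exfalso; rw [← h'] at hGα; linarith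
  have hαb : α < b := by
    rcases hαmem.2.lt_or_eq with h' | h'
    · exact h'
    · exfalso; rw [h'] at hGα; linarith
  have hα0 : 0 < α := lt_trans hrpos hαr
  have hDα : 0 < s*(A*α^2 - B) := by
    have : 0 < A*α^2 - B := by nlinarith [pow_lt_pow_left₀ hαr hrpos.le (by norm_num : 2 ≠ 0)]
    positivity
  have hsol : Real.tanh (s*α) = (p - q*α)/(s*(A*α^2 - B)) := by
    rw [eq_div_iff hDα.ne']
    simp only [hG] at hGα
    linarith
  constructor
  · refine ⟨α, ⟨hα0, hsol⟩, ?_⟩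
    intro β ⟨hβ0, hβeq⟩
    obtain ⟨hβr, hβb⟩ := bound β hβ0 hβeq
    have hDβ : 0 < s*(A*β^2 - B) := by
      have : 0 < A*β^2 - B := by nlinarith [pow_lt_pow_left₀ hβr hrpos.le (by norm_num : 2 ≠ 0)]
      positivity
    have hGβ : G β = 0 := by
      rw [eq_div_iff hDβ.ne'] at hβeq
      simp only [hG]
      linarith
    exact hmono.injOn (Set.mem_Icc.2 ⟨hβr.le, hβb.le⟩) (Set.mem_Icc.2 ⟨hαr.le, hαb.le⟩)
      (by rw [hGβ, hGα])
  · exact bound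

/-- Let `δ, κ, λ > 0`, `μ ≥ 0` with `δλ − κ > 0`, and suppose
`√((κ + δμ)/(δ(δλ − κ))) < δ/(2κ)`. Then the equation
`tanh(√(2δ)·α) = δ(δ − 2κα)/(√(2δ)(δ(δλ − κ)α² − (κ + δμ)))` has exactly one solution
`α ∈ (0, ∞)`, and it satisfies `√((κ + δμ)/(δ(δλ − κ))) < α < δ/(2κ)`. -/
theorem statement11 (δ κ lam μ : ℝ) (hδ : 0 < δ) (hκ : 0 < κ) (hlam : 0 < lam)
    (hμ : 0 ≤ μ) (h : 0 < δ*lam - κ)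
    (hord : Real.sqrt ((κ + δ*μ)/(δ*(δ*lam - κ))) < δ/(2*κ)) :
    (∃! α : ℝ, 0 < α ∧
      Real.tanh (Real.sqrt (2*δ) * α) =
        δ*(δ - 2*κ*α) / (Real.sqrt (2*δ) * (δ*(δ*lam - κ)*α^2 - (κ + δ*μ)))) ∧
    (∀ α : ℝ, 0 < α →
      Real.tanh (Real.sqrt (2*δ) * α) =
        δ*(δ - 2*κ*α) / (Real.sqrt (2*δ) * (δ*(δ*lam - κ)*α^2 - (κ + δ*μ))) →
      Real.sqrt ((κ + δ*μ)/(δ*(δ*lam - κ))) < α ∧ α < δ/(2*κ)) := by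
  have hb : δ^2/(2*δ*κ) = δ/(2*κ) := by
    field_simp
  have hnum : ∀ α : ℝ, δ^2 - 2*δ*κ*α = δ*(δ - 2*κ*α) := fun α => by ring
  obtain ⟨h1, h2⟩ := key (Real.sqrt (2*δ)) (δ*(δ*lam - κ)) (κ + δ*μ) (δ^2) (2*δ*κ)
    (Real.sqrt_pos.2 (by positivity)) (mul_pos hδ h) (by positivity) (by positivity)
    (by positivity) (by rw [hb]; exact hord)
  constructor
  · simpa only [hnum, hb] using h1
  · simpa only [hnum, hb] using h2
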